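/- Let k, ℓ > 0, let π1 ∈ T_k and π2 ∈ T_ℓ, let 1 ≤ i ≤ slmax(π2), and let a_i be the i-th left-to-right maximum of S(π2). Then S(C2(π1, π2, i)) = (S(π1))^{+(0,k,a_i)}·(S(π2))^{+(k−1,a_i+1,k)}·(k+ℓ+1). -/

import Mathlib

namespace TSP

theorem foldr_max_mem {α : Type} [LinearOrder α] (x : α) (l : List α) :
    l.foldr max x ∈ x :: l := by
  induction l with
  | nil => simp
  | cons a t ih =>
    simp only [List.foldr_cons]
    rcases max_choice a (t.foldr max x) with h | h <;> rw [h]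
    · simp
    · rcases List.mem_cons.mp ih with h' | h'
      · rw [h']; simp
      · exact List.mem_cons.mpr (Or.inr (List.mem_cons.mpr (Or.inr h')))

theorem length_takeWhile_lt {α : Type} [DecidableEq α] {m : α} {l : List α}
    (h : m ∈ l) : (l.takeWhile (· ≠ m)).length < l.length := by
  have hd : l.dropWhile (· ≠ m) ≠ [] := by
    intro hnil
    have := List.dropWhile_eq_nil_iff.mp hnil m h
    simp at this
  have hsum : (l.takeWhile (· ≠ m)).length + (l.dropWhile (· ≠ m)).length = l.length := by
    rw [← List.length_append, List.takeWhile_append_dropWhile]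
  have : 0 < (l.dropWhile (· ≠ m)).length := List.length_pos_iff.mpr hd
  omega

theorem length_tail_dropWhile_lt {α : Type} [DecidableEq α] {m : α} {l : List α}
    (h : l ≠ []) : ((l.dropWhile (· ≠ m)).tail).length < l.length := by
  have hsum : (l.takeWhile (· ≠ m)).length + (l.dropWhile (· ≠ m)).length = l.length := by
    rw [← List.length_append, List.takeWhile_append_dropWhile]
  have h2 : ((l.dropWhile (· ≠ m)).tail).length = (l.dropWhile (· ≠ m)).length - 1 :=
    List.length_tail
  have : 0 < l.length := List.length_pos_iff.mpr h
  omega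

/-- The stack-sorting operator `S`: `S(ε) = ε`, and if `A` is nonempty with
largest element `m` and `A = A_L · (m) · A_R`, then `S(A) = S(A_L) · S(A_R) · (m)`. -/
def S {α : Type} [LinearOrder α] : List α → List α
  | [] => []
  | x :: l =>
    let m := l.foldr max x
    S ((x :: l).takeWhile (· ≠ m)) ++ S (((x :: l).dropWhile (· ≠ m)).tail) ++ [m]
termination_by l => l.length
decreasing_by
  · have h := foldr_max_mem x l
    rw [← List.foldr_attach (f := max)] at h
    exact length_takeWhile_lt h
  · exact length_tail_dropWhile_lt (by simp)

/-- The identity permutation `id_n = (1, 2, …, n)` as a list. -/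
def idPerm (n : ℕ) : List ℕ := List.range' 1 n

/-- `l` is a permutation of `{1, …, n}` (viewed as a sequence). -/
def IsPermOf (n : ℕ) (l : List ℕ) : Prop := l.Perm (idPerm n)

/-- `l` is a two-stack sortable permutation (of `{1, …, len l}`). -/
def Is2SS (l : List ℕ) : Prop := IsPermOf l.length l ∧ S (S l) = idPerm l.length

/-- `σ^{+k}`: add `k` to every entry. -/
def shift (k : ℕ) (l : List ℕ) : List ℕ := l.map (· + k)

/-- `σ^{+(k1,m,k2)}`: add `k1` to every entry strictly smaller than `m`, `k2` to the others. -/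
def shift3 (k1 m k2 : ℕ) (l : List ℕ) : List ℕ :=
  l.map (fun a => if a < m then a + k1 else a + k2)

/-- Standardization `P(A)`: the permutation of `{1,…,len A}` in the same relative order. -/
def stand (l : List ℕ) : List ℕ := l.map (fun a => (l.filter (fun b => b ≤ a)).length)

/-- Avoidance of the pattern 231: no positions `i < j < k` with `l(k) < l(i) < l(j)`. -/
def Avoids231 (l : List ℕ) : Prop :=
  ¬ ∃ i j k, i < j ∧ j < k ∧ k < l.length ∧
      l.getD k 0 < l.getD i 0 ∧ l.getD i 0 < l.getD j 0

/-- The list of values of the left-to-right maxima of `l`, in order. -/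
def lrMaxima (l : List ℕ) : List ℕ :=
  ((List.range l.length).filter
    (fun i => (l.take i).all (fun b => b < l.getD i 0))).map (fun i => l.getD i 0)

/-- `lmax`: the number of left-to-right maxima. -/
def lmax (l : List ℕ) : ℕ :=
  (List.range l.length).countP (fun i => (l.take i).all (fun b => b < l.getD i 0))

/-- `rmax`: the number of right-to-left maxima. -/
def rmax (l : List ℕ) : ℕ :=
  (List.range l.length).countP (fun i => (l.drop (i+1)).all (fun b => b < l.getD i 0))

/-- `asc`: the number of ascents. -/
def asc (l : List ℕ) : ℕ :=
  (List.range (l.length - 1)).countP (fun i => l.getD i 0 < l.getD (i+1) 0)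

/-- `des`: the number of descents. -/
def des (l : List ℕ) : ℕ :=
  (List.range (l.length - 1)).countP (fun i => l.getD (i+1) 0 < l.getD i 0)

/-- `slmax(π)`: the number of left-to-right maxima of `S(π)`. -/
def slmax (l : List ℕ) : ℕ := lmax (S l)

/-- `sldes(π)`: the number of entries `a` that precede `a - 1` in `S(π)`. -/
def sldes (l : List ℕ) : ℕ :=
  (List.range (S l).length).countP
    (fun i => ((S l).drop (i+1)).any (fun b => b + 1 = (S l).getD i 0))

/-- The construction `C1(π1, π2) = π1 · (k+ℓ+1) · π2^{+k}`. -/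
def C1 (p1 p2 : List ℕ) : List ℕ :=
  p1 ++ (p1.length + p2.length + 1) :: shift p1.length p2

/-- The `i`-th left-to-right maximum `a_i` of `S(π2)` (1-indexed). -/
def lrm (p2 : List ℕ) (i : ℕ) : ℕ := (lrMaxima (S p2)).getD (i - 1) 0

/-- The construction `C2(π1, π2, i) = π1^{+(0,k,a_i)} · (k+ℓ+1) · π2^{+(k-1,a_i+1,k)}`. -/
def C2 (p1 p2 : List ℕ) (i : ℕ) : List ℕ :=
  shift3 0 p1.length (lrm p2 i) p1 ++
    (p1.length + p2.length + 1) :: shift3 (p1.length - 1) (lrm p2 i + 1) p1.length p2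

/-- The decomposition `D(π) = (P(π_ℓ), P(π_r))`, where `π = π_ℓ · (n) · π_r`
with `n` the largest entry of `π`. -/
def D (l : List ℕ) : List ℕ × List ℕ :=
  match l with
  | [] => ([], [])
  | x :: t =>
    let m := t.foldr max x
    (stand ((x :: t).takeWhile (· ≠ m)), stand (((x :: t).dropWhile (· ≠ m)).tail))

theorem le_foldr_max {α : Type} [LinearOrder α] (x : α) (l : List α) : x ≤ l.foldr max x := by
  induction l with
  | nil => simp
  | cons a t ih => simp only [List.foldr_cons]; exact le_trans ih (le_max_right _ _)

theorem foldr_max_le {α : Type} [LinearOrder α] {x b : α} {l : List α}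
    (h : ∀ y ∈ l, y ≤ b) (hx : x ≤ b) : l.foldr max x ≤ b := by
  induction l with
  | nil => simpa
  | cons a t ih =>
    simp only [List.foldr_cons]
    exact max_le (h a (by simp)) (ih fun y hy => h y (by simp [hy]))

theorem takeWhile_append_all {α : Type} (p : α → Bool) {A : List α} (B : List α)
    (h : ∀ x ∈ A, p x) : (A ++ B).takeWhile p = A ++ B.takeWhile p := by
  induction A with
  | nil => simp
  | cons a t ih =>
    simp only [List.cons_append, List.takeWhile_cons, h a (by simp)]
    rw [ih fun x hx => h x (by simp [hx])]; simp

theorem dropWhile_append_all {α : Type} (p : α → Bool) {A : List α} (B : List α)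
    (h : ∀ x ∈ A, p x) : (A ++ B).dropWhile p = B.dropWhile p := by
  induction A with
  | nil => simp
  | cons a t ih =>
    simp only [List.cons_append, List.dropWhile_cons, h a (by simp)]
    exact ih fun x hx => h x (by simp [hx])

theorem S_nil : S ([] : List ℕ) = [] := by rw [S]

theorem S_cons (x : ℕ) (l : List ℕ) :
    S (x :: l) = S ((x :: l).takeWhile (· ≠ l.foldr max x)) ++
      S (((x :: l).dropWhile (· ≠ l.foldr max x)).tail) ++ [l.foldr max x] := by
  rw [S]

theorem S_append_max (A B : List ℕ) (m : ℕ) (hA : ∀ x ∈ A, x < m) (hB : ∀ x ∈ B, x < m) :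
    S (A ++ m :: B) = S A ++ S B ++ [m] := by
  have hBm : B.foldr max m = m :=
    le_antisymm (foldr_max_le (fun y hy => le_of_lt (hB y hy)) le_rfl) (le_foldr_max _ _)
  match A with
  | [] =>
    rw [List.nil_append, S_cons, hBm]
    have h1 : (m :: B).takeWhile (· ≠ m) = [] := by
      simp [List.takeWhile_cons]
    have h2 : (m :: B).dropWhile (· ≠ m) = m :: B := by
      simp [List.dropWhile_cons]
    rw [h1, h2, S_nil]
    simp
  | x :: A' =>
    have hfold : (A' ++ m :: B).foldr max x = m := by
      rw [List.foldr_append]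
      simp only [List.foldr_cons]
      have hxm : x ≤ m := le_of_lt (hA x (by simp))
      have hBx : B.foldr max x ≤ m := foldr_max_le (fun y hy => le_of_lt (hB y hy)) hxm
      rw [max_eq_left hBx]
      exact le_antisymm (foldr_max_le (fun y hy => le_of_lt (hA y (by simp [hy]))) le_rfl)
        (le_foldr_max _ _)
    have hallA : ∀ y ∈ x :: A', ((y ≠ m) : Bool) := by
      intro y hy; simpa using ne_of_lt (hA y hy)
    rw [show (x :: A') ++ m :: B = x :: (A' ++ m :: B) by simp, S_cons, hfold]
    have ht : (x :: (A' ++ m :: B)).takeWhile (· ≠ m) = x :: A' := by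
      rw [show x :: (A' ++ m :: B) = (x :: A') ++ m :: B by simp,
        takeWhile_append_all _ _ hallA]
      simp [List.takeWhile_cons]
    have hd : (x :: (A' ++ m :: B)).dropWhile (· ≠ m) = m :: B := by
      rw [show x :: (A' ++ m :: B) = (x :: A') ++ m :: B by simp,
        dropWhile_append_all _ _ hallA]
      simp [List.dropWhile_cons]
    rw [ht, hd]
    simp

theorem dropWhile_decomp {m : ℕ} {l : List ℕ} (h : m ∈ l) :
    l.dropWhile (· ≠ m) = m :: (l.dropWhile (· ≠ m)).tail := by
  have hd : l.dropWhile (· ≠ m) ≠ [] := by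
    intro hnil
    have := List.dropWhile_eq_nil_iff.mp hnil m h
    simp at this
  have hkey : (l.dropWhile (· ≠ m)).head hd = m := by
    have := List.head_dropWhile_not (· ≠ m) hd
    simpa using this
  conv_lhs => rw [← List.cons_head_tail hd]
  rw [hkey]

theorem S_perm_aux : ∀ n : ℕ, ∀ l : List ℕ, l.length ≤ n → (S l).Perm l := by
  intro n
  induction n with
  | zero =>
    intro l hl
    rw [List.length_eq_zero_iff.mp (Nat.le_zero.mp hl), S_nil]
  | succ n ih =>
    intro l hl
    match l with
    | [] => rw [S_nil]
    | x :: t =>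
      set m := t.foldr max x with hm
      have hmem : m ∈ x :: t := foldr_max_mem x t
      rw [S_cons, ← hm]
      have hT := length_takeWhile_lt (l := x :: t) hmem
      have hD := length_tail_dropWhile_lt (m := m) (l := x :: t) (by simp)
      have hl' : (x :: t).length = t.length + 1 := rfl
      have pT := ih ((x :: t).takeWhile (· ≠ m)) (by omega)
      have pD := ih (((x :: t).dropWhile (· ≠ m)).tail) (by omega)
      have step1 : (S ((x :: t).takeWhile (· ≠ m)) ++ S (((x :: t).dropWhile (· ≠ m)).tail)
          ++ [m]).Perm ((x :: t).takeWhile (· ≠ m) ++ ((((x :: t).dropWhile (· ≠ m)).tail) ++ [m])) := by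
        rw [List.append_assoc]
        exact pT.append (pD.append_right [m])
      have step2 : ((x :: t).takeWhile (· ≠ m) ++ ((((x :: t).dropWhile (· ≠ m)).tail) ++ [m])).Perm
          ((x :: t).takeWhile (· ≠ m) ++ (m :: ((x :: t).dropWhile (· ≠ m)).tail)) :=
        List.Perm.append_left _ (List.perm_append_singleton _ _)
      have step3 : (x :: t).takeWhile (· ≠ m) ++ (m :: ((x :: t).dropWhile (· ≠ m)).tail)
          = x :: t := by rw [← dropWhile_decomp hmem, List.takeWhile_append_dropWhile]
      rw [step3] at step2
      exact step1.trans step2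

theorem S_perm (l : List ℕ) : (S l).Perm l := S_perm_aux l.length l le_rfl

theorem S_map_aux {f : ℕ → ℕ} (hf : StrictMono f) :
    ∀ n : ℕ, ∀ l : List ℕ, l.length ≤ n → S (l.map f) = (S l).map f := by
  intro n
  induction n with
  | zero =>
    intro l hl
    rw [List.length_eq_zero_iff.mp (Nat.le_zero.mp hl)]; rw [List.map_nil, S_nil, List.map_nil]
  | succ n ih =>
    intro l hl
    match l with
    | [] => rw [List.map_nil, S_nil, List.map_nil]
    | x :: t =>
      set m := t.foldr max x with hm
      have hfold : (t.map f).foldr max (f x) = f m := by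
        rw [hm]
        clear hl hm
        induction t with
        | nil => simp
        | cons a s ihs => simp only [List.map_cons, List.foldr_cons, ihs, hf.monotone.map_max]
      have hpred : (fun y => decide (f y ≠ f m)) = (fun y => decide (y ≠ m)) := by
        funext y; simp [hf.injective.ne_iff]
      have hT := length_takeWhile_lt (l := x :: t) (foldr_max_mem x t)
      rw [← hm] at hT
      have hD := length_tail_dropWhile_lt (m := m) (l := x :: t) (by simp)
      have hl' : (x :: t).length = t.length + 1 := rfl
      rw [List.map_cons, S_cons, hfold, S_cons, ← hm]
      rw [show (f x :: t.map f) = (x :: t).map f by simp]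
      rw [List.takeWhile_map, List.dropWhile_map]
      simp only [Function.comp_def]
      rw [show ((x :: t).takeWhile fun y => decide (f y ≠ f m)) = (x :: t).takeWhile (· ≠ m) by
          rw [hpred],
        show ((x :: t).dropWhile fun y => decide (f y ≠ f m)) = (x :: t).dropWhile (· ≠ m) by
          rw [hpred]]
      rw [← List.map_tail, ih ((x :: t).takeWhile (· ≠ m)) (by omega),
        ih (((x :: t).dropWhile (· ≠ m)).tail) (by omega)]
      simp

theorem S_map {f : ℕ → ℕ} (hf : StrictMono f) (l : List ℕ) : S (l.map f) = (S l).map f :=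
  S_map_aux hf l.length l le_rfl

theorem mem_of_mem_lrMaxima {l : List ℕ} {a : ℕ} (h : a ∈ lrMaxima l) : a ∈ l := by
  unfold lrMaxima at h
  obtain ⟨idx, hidx, rfl⟩ := List.mem_map.mp h
  have hlt : idx < l.length := List.mem_range.mp (List.mem_filter.mp hidx).1
  rw [List.getD_eq_getElem l 0 hlt]
  exact List.getElem_mem hlt

theorem lrm_mem {p2 : List ℕ} {i : ℕ} (hi1 : 1 ≤ i) (hi2 : i ≤ slmax p2) :
    lrm p2 i ∈ S p2 := by
  apply mem_of_mem_lrMaxima (l := S p2)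
  unfold lrm
  have hlen : (lrMaxima (S p2)).length = slmax p2 := by
    unfold lrMaxima slmax lmax
    rw [List.length_map, ← List.countP_eq_length_filter]
  have hlt : i - 1 < (lrMaxima (S p2)).length := by omega
  rw [List.getD_eq_getElem _ 0 hlt]
  exact List.getElem_mem hlt

theorem mem_bounds {n : ℕ} {l : List ℕ} (hp : IsPermOf n l) {x : ℕ} (hx : x ∈ l) :
    1 ≤ x ∧ x ≤ n := by
  have := hp.mem_iff.mp hx
  unfold idPerm at this
  have := List.mem_range'_1.mp this
  omega


/-- For `k, ℓ > 0`, `π1 ∈ T_k`, `π2 ∈ T_ℓ`, `1 ≤ i ≤ slmax(π2)` and `a_i`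
the `i`-th left-to-right maximum of `S(π2)`,
`S(C2(π1, π2, i)) = (S(π1))^{+(0,k,a_i)} · (S(π2))^{+(k−1,a_i+1,k)} · (k+ℓ+1)`. -/
theorem S_C2 (k ℓ : ℕ) (hk : 0 < k) (hℓ : 0 < ℓ) (π1 π2 : List ℕ)
    (h1 : π1.length = k) (h1' : Is2SS π1) (h2 : π2.length = ℓ) (h2' : Is2SS π2)
    (i : ℕ) (hi1 : 1 ≤ i) (hi2 : i ≤ slmax π2) (a : ℕ) (ha : a = lrm π2 i) :
    S (C2 π1 π2 i) =
      shift3 0 k a (S π1) ++ shift3 (k - 1) (a + 1) k (S π2) ++ [k + ℓ + 1] := by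
  have hmem1 : ∀ x ∈ π1, 1 ≤ x ∧ x ≤ k := fun x hx => by
    have := mem_bounds h1'.1 hx; omega
  have hmem2 : ∀ x ∈ π2, 1 ≤ x ∧ x ≤ ℓ := fun x hx => by
    have := mem_bounds h2'.1 hx; omega
  have haℓ : 1 ≤ a ∧ a ≤ ℓ := by
    rw [ha]
    exact hmem2 _ ((S_perm π2).mem_iff.mp (lrm_mem hi1 hi2))
  have hf1 : StrictMono (fun x => if x < k then x + 0 else x + a) := by
    intro x y hxy; dsimp only; split <;> split <;> omega
  have hf2 : StrictMono (fun x => if x < a + 1 then x + (k - 1) else x + k) := by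
    intro x y hxy; dsimp only; split <;> split <;> omega
  have hC2 : C2 π1 π2 i =
      π1.map (fun x => if x < k then x + 0 else x + a) ++ (k + ℓ + 1) ::
        π2.map (fun x => if x < a + 1 then x + (k - 1) else x + k) := by
    unfold C2 shift3
    rw [← ha, h1, h2]
  rw [hC2, S_append_max, S_map hf1, S_map hf2]
  · unfold shift3; rfl
  · intro y hy
    obtain ⟨x, hx, rfl⟩ := List.mem_map.mp hy
    have := hmem1 x hx; split <;> omega
  · intro y hy
    obtain ⟨x, hx, rfl⟩ := List.mem_map.mp hy
    have := hmem2 x hx; split <;> omega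

end TSP
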